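/- Let q be a prime power and let m, n > 1 be relatively prime integers with smallest prime divisors m₁ and n₁ respectively. Let φ(x,y) ∈ F_q[x,y] be a polynomial with 0 < deg_x φ < m₁ and 0 < deg_y φ < n₁. Let f, g ∈ F_q[x] be monic irreducible polynomials of degrees m and n, with roots α₁, …, α_m and β₁, …, β_n in the algebraic closure of F_q. Then the polynomial ∏_{i=1}^m ∏_{j=1}^n (x − φ(α_i, β_j)) is irreducible in F_q[x]. -/

import Mathlib

open Polynomial

set_option linter.unusedSectionVars false
set_option maxHeartbeats 1000000

section Aux
open IntermediateField

variable {F : Type*} [Field F] [Fintype F]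

local notation "𝕂" => AlgebraicClosure F

lemma exists_powQ (k : ℕ) :
    ∃ ρ : 𝕂 →ₐ[F] 𝕂, ∀ x : 𝕂, ρ x = x ^ Fintype.card F ^ k := by
  obtain ⟨s, hp, hs⟩ := FiniteField.card F (ringChar F)
  haveI : CharP 𝕂 (ringChar F) := charP_of_injective_algebraMap (algebraMap F 𝕂).injective _
  haveI : Fact (Nat.Prime (ringChar F)) := ⟨hp⟩
  have key : ∀ x : 𝕂, x ^ ringChar F ^ ((s : ℕ) * k) = x ^ Fintype.card F ^ k := by
    intro x; rw [hs, ← pow_mul]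
  refine ⟨{ toRingHom := iterateFrobenius 𝕂 (ringChar F) ((s : ℕ)*k), commutes' := ?_ }, ?_⟩
  · intro a
    show iterateFrobenius 𝕂 (ringChar F) ((s : ℕ)*k) _ = _
    rw [iterateFrobenius_def, key, ← map_pow, FiniteField.pow_card_pow]
  · intro x
    show iterateFrobenius 𝕂 (ringChar F) ((s : ℕ)*k) x = _
    rw [iterateFrobenius_def, key]

lemma pow_fix_of_pow_fix {M : Type*} [Monoid M] {x : M} {a : ℕ} (h : x ^ a = x) (t : ℕ) :
    x ^ a ^ t = x := by
  induction t with
  | zero => simp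
  | succ t ih => rw [pow_succ, pow_mul, ih, h]

lemma pow_fix_mul {M : Type*} [Monoid M] {x : M} {q k : ℕ} (h : x ^ q ^ k = x) (t : ℕ) :
    x ^ q ^ (t * k) = x := by
  rw [show q ^ (t * k) = (q ^ k) ^ t by rw [mul_comm, pow_mul]]
  exact pow_fix_of_pow_fix h t

lemma pow_card_minpoly (x : 𝕂) : x ^ Fintype.card F ^ (minpoly F x).natDegree = x := by
  have hint : IsIntegral F x := (Algebra.IsAlgebraic.isAlgebraic (R := F) x).isIntegral
  haveI : FiniteDimensional F F⟮x⟯ := IntermediateField.adjoin.finiteDimensional hint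
  haveI : Finite F⟮x⟯ := Module.finite_of_finite F
  haveI : Fintype F⟮x⟯ := Fintype.ofFinite _
  have hcard : Fintype.card F⟮x⟯ = Fintype.card F ^ (minpoly F x).natDegree := by
    rw [Module.card_eq_pow_finrank (K := F) (V := ↥F⟮x⟯), IntermediateField.adjoin.finrank hint]
  have h2 := FiniteField.pow_card (⟨x, IntermediateField.mem_adjoin_simple_self F x⟩ : F⟮x⟯)
  rw [hcard] at h2
  have h3 := congrArg (Subtype.val) h2
  push_cast at h3
  exact h3

lemma minpoly_natDegree_dvd {x : 𝕂} {k : ℕ} (h : x ^ Fintype.card F ^ k = x) :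
    (minpoly F x).natDegree ∣ k := by
  classical
  set q := Fintype.card F with hqdef
  have hq1 : 1 < q := Fintype.one_lt_card
  have hint : IsIntegral F x := (Algebra.IsAlgebraic.isAlgebraic (R := F) x).isIntegral
  set d := (minpoly F x).natDegree with hd
  have hd0 : 0 < d := minpoly.natDegree_pos hint
  rcases Nat.eq_zero_or_pos (k % d) with hr | hr
  · exact Nat.dvd_of_mod_eq_zero hr
  exfalso
  set r := k % d with hrdef
  have hrd : r < d := Nat.mod_lt _ hd0
  have hxr : x ^ q ^ r = x := by
    have h1 : x ^ q ^ ((k / d) * d) = x := pow_fix_mul (pow_card_minpoly x) _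
    have h2 : q ^ k = q ^ ((k / d) * d) * q ^ r := by
      rw [← pow_add]
      congr 1
      exact (Nat.div_add_mod' k d).symm
    rw [h2, pow_mul, h1] at h
    exact h
  -- every element of F⟮x⟯ is fixed by the q^r power map
  obtain ⟨ρ, hρ⟩ := exists_powQ (F := F) r
  have hxS : x ∈ AlgHom.equalizer ρ (AlgHom.id F 𝕂) := by
    rw [AlgHom.mem_equalizer, hρ]
    exact hxr
  have hsub : Algebra.adjoin F {x} ≤ AlgHom.equalizer ρ (AlgHom.id F 𝕂) :=
    Algebra.adjoin_le (by simpa using hxS)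
  have hfix : ∀ z : F⟮x⟯, (z : 𝕂) ^ q ^ r = z := by
    intro z
    have hz : (z : 𝕂) ∈ (F⟮x⟯).toSubalgebra := z.2
    rw [IntermediateField.adjoin_simple_toSubalgebra_of_isAlgebraic hint.isAlgebraic] at hz
    have := hsub hz
    rw [AlgHom.mem_equalizer, hρ] at this
    exact this
  -- counting
  haveI : FiniteDimensional F F⟮x⟯ := IntermediateField.adjoin.finiteDimensional hint
  haveI : Finite F⟮x⟯ := Module.finite_of_finite F
  haveI : Fintype F⟮x⟯ := Fintype.ofFinite _
  have hcard : Fintype.card F⟮x⟯ = q ^ d := by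
    rw [Module.card_eq_pow_finrank (K := F) (V := ↥F⟮x⟯), IntermediateField.adjoin.finrank hint]
  set N := q ^ r with hN
  have hN1 : 1 < N := Nat.one_lt_pow hr.ne' hq1
  set θ : Polynomial 𝕂 := X ^ N - X with hθdef
  have hθcoeff : θ.coeff N = 1 := by
    simp [hθdef, coeff_X, hN1.ne', (hN1.ne : (1:ℕ) ≠ N)]
  have hθ : θ ≠ 0 := fun h0 => by simp [h0] at hθcoeff
  have hdegθ : θ.natDegree ≤ N := by
    refine le_trans (natDegree_sub_le _ _) ?_
    simp [natDegree_X_pow, natDegree_X]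
    omega
  have hroot : ∀ z : F⟮x⟯, (z : 𝕂) ∈ θ.roots.toFinset := by
    intro z
    rw [Multiset.mem_toFinset, mem_roots hθ]
    simp only [IsRoot.def, hθdef, eval_sub, eval_pow, eval_X]
    rw [hfix z, sub_self]
  have hinj : Function.Injective (fun z : F⟮x⟯ => (⟨(z : 𝕂), hroot z⟩ : θ.roots.toFinset)) := by
    intro a b hab
    have h2 := congrArg (fun z : θ.roots.toFinset => (z : 𝕂)) hab
    exact Subtype.ext h2
  have hle : Fintype.card F⟮x⟯ ≤ θ.roots.toFinset.card := by
    have := Fintype.card_le_of_injective _ hinj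
    rwa [Fintype.card_coe] at this
  have hle2 : (θ.roots.toFinset.card : ℕ) ≤ N :=
    le_trans (le_trans (Multiset.toFinset_card_le _) (Polynomial.card_roots' θ)) hdegθ
  have : q ^ d ≤ N := by omega
  have : N < q ^ d := Nat.pow_lt_pow_right hq1 hrd
  omega

lemma pow_fix_of_minpoly_dvd {x : 𝕂} {k : ℕ} (h : (minpoly F x).natDegree ∣ k) :
    x ^ Fintype.card F ^ k = x := by
  obtain ⟨t, ht⟩ := h
  subst ht
  rw [mul_comm]
  exact pow_fix_mul (pow_card_minpoly x) t

lemma finsupp_fin2_ext {s t : Fin 2 →₀ ℕ} (h0 : s 0 = t 0) (h1 : s 1 = t 1) : s = t := by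
  ext i
  fin_cases i
  · exact h0
  · exact h1

lemma psi_eval (β : 𝕂) (φ : MvPolynomial (Fin 2) F) (z : 𝕂) :
    (MvPolynomial.aeval ![Polynomial.X, Polynomial.C β] φ : Polynomial 𝕂).eval z
      = MvPolynomial.aeval ![z, β] φ := by
  have h1 := MvPolynomial.comp_aeval_apply
      (f := ![Polynomial.X, Polynomial.C β])
      ((Polynomial.aeval z : Polynomial 𝕂 →ₐ[𝕂] 𝕂).restrictScalars F) φ
  have h2 : (fun i => ((Polynomial.aeval z : Polynomial 𝕂 →ₐ[𝕂] 𝕂).restrictScalars F)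
      (![Polynomial.X, Polynomial.C β] i)) = ![z, β] := by
    funext i
    fin_cases i <;> simp
  rw [h2] at h1
  rw [← h1]
  simp [Polynomial.coe_aeval_eq_eval]

lemma psi_sum_repr (β : 𝕂) (φ : MvPolynomial (Fin 2) F) :
    (MvPolynomial.aeval ![Polynomial.X, Polynomial.C β] φ : Polynomial 𝕂)
      = ∑ s ∈ φ.support, Polynomial.C ((algebraMap F 𝕂) (MvPolynomial.coeff s φ) * β ^ (s 1))
          * Polynomial.X ^ (s 0) := by
  classical
  rw [MvPolynomial.aeval_def, MvPolynomial.eval₂_eq']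
  refine Finset.sum_congr rfl fun s _ => ?_
  rw [Fin.prod_univ_two]
  simp only [Matrix.cons_val_zero, Matrix.cons_val_one, Matrix.head_cons]
  rw [← Polynomial.C_pow, Polynomial.algebraMap_apply, map_mul]
  ring

lemma psi_natDegree_le (β : 𝕂) (φ : MvPolynomial (Fin 2) F) :
    (MvPolynomial.aeval ![Polynomial.X, Polynomial.C β] φ : Polynomial 𝕂).natDegree
      ≤ φ.degreeOf 0 := by
  classical
  rw [psi_sum_repr]
  refine Polynomial.natDegree_sum_le_of_forall_le _ _ fun s hs => ?_
  refine le_trans (Polynomial.natDegree_mul_le) ?_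
  simp only [Polynomial.natDegree_C, Polynomial.natDegree_pow, Polynomial.natDegree_X, zero_add,
    mul_one]
  exact MvPolynomial.degreeOf_le_iff.mp le_rfl s hs

lemma psi_coeff_deg (β : 𝕂) (φ : MvPolynomial (Fin 2) F) :
    (MvPolynomial.aeval ![Polynomial.X, Polynomial.C β] φ : Polynomial 𝕂).coeff (φ.degreeOf 0)
      = Polynomial.aeval β
          (∑ s ∈ φ.support.filter (fun s => s 0 = φ.degreeOf 0),
            Polynomial.C (MvPolynomial.coeff s φ) * Polynomial.X ^ (s 1)) := by
  classical
  rw [psi_sum_repr, Polynomial.finset_sum_coeff, map_sum]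
  have hterm : ∀ s ∈ φ.support,
      (Polynomial.C ((algebraMap F 𝕂) (MvPolynomial.coeff s φ) * β ^ (s 1))
        * Polynomial.X ^ (s 0)).coeff (φ.degreeOf 0)
      = if s 0 = φ.degreeOf 0
          then (algebraMap F 𝕂) (MvPolynomial.coeff s φ) * β ^ (s 1) else 0 := by
    intro s _
    rw [Polynomial.coeff_C_mul, Polynomial.coeff_X_pow]
    by_cases hD : s 0 = φ.degreeOf 0
    · rw [if_pos hD, if_pos hD.symm, mul_one]
    · rw [if_neg hD, if_neg (fun hc => hD hc.symm), mul_zero]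
  rw [Finset.sum_congr rfl hterm, ← Finset.sum_filter]
  refine Finset.sum_congr rfl fun s _ => ?_
  simp [Polynomial.aeval_C]

lemma psi_coeff_ne_zero {β : 𝕂} {n : ℕ} (hnd : (minpoly F β).natDegree = n)
    {φ : MvPolynomial (Fin 2) F} (hx₀ : 0 < φ.degreeOf 0) (hy : φ.degreeOf 1 < n) :
    (MvPolynomial.aeval ![Polynomial.X, Polynomial.C β] φ : Polynomial 𝕂).coeff (φ.degreeOf 0)
      ≠ 0 := by
  classical
  rw [psi_coeff_deg]
  set D := φ.degreeOf 0 with hD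
  set Q : Polynomial F := ∑ s ∈ φ.support.filter (fun s => s 0 = D),
      Polynomial.C (MvPolynomial.coeff s φ) * Polynomial.X ^ (s 1) with hQ
  have hφ0 : φ ≠ 0 := by
    intro h0
    rw [hD, h0] at hx₀
    simp at hx₀
  obtain ⟨s₀, hs₀mem, hs₀⟩ := Finset.exists_mem_eq_sup φ.support
      (MvPolynomial.support_nonempty.mpr hφ0) (fun s => s 0)
  have hs₀D : s₀ 0 = D := by rw [hD, MvPolynomial.degreeOf_eq_sup, hs₀]
  have hQcoeff : Q.coeff (s₀ 1) = MvPolynomial.coeff s₀ φ := by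
    rw [hQ, Polynomial.finset_sum_coeff]
    rw [Finset.sum_eq_single s₀]
    · rw [Polynomial.coeff_C_mul, Polynomial.coeff_X_pow, if_pos rfl, mul_one]
    · intro s hs hne
      rw [Finset.mem_filter] at hs
      rw [Polynomial.coeff_C_mul, Polynomial.coeff_X_pow, if_neg, mul_zero]
      intro h1
      exact hne (finsupp_fin2_ext (hs.2.trans hs₀D.symm) h1.symm)
    · intro hnot
      exact absurd (Finset.mem_filter.mpr ⟨hs₀mem, hs₀D⟩) hnot
  have hQne : Q ≠ 0 := by
    intro h0
    rw [h0] at hQcoeff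
    simp only [Polynomial.coeff_zero] at hQcoeff
    exact (MvPolynomial.mem_support_iff.mp hs₀mem) hQcoeff.symm
  have hQdeg : Q.natDegree < n := by
    refine lt_of_le_of_lt (Polynomial.natDegree_sum_le_of_forall_le _ _ fun s hs => ?_) hy
    refine le_trans Polynomial.natDegree_mul_le ?_
    simp only [Polynomial.natDegree_C, Polynomial.natDegree_pow, Polynomial.natDegree_X, zero_add,
      mul_one]
    exact MvPolynomial.degreeOf_le_iff.mp le_rfl s (Finset.mem_filter.mp hs).1
  intro h0
  have h1 := minpoly.degree_le_of_ne_zero F β hQne h0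
  have h2 : (minpoly F β).natDegree ≤ Q.natDegree := Polynomial.natDegree_le_natDegree h1
  rw [hnd] at h2
  omega

lemma core_lemma {α β : 𝕂} {m n : ℕ} (hmd : (minpoly F α).natDegree = m)
    (hnd : (minpoly F β).natDegree = n) (hm : 1 < m)
    {φ : MvPolynomial (Fin 2) F} (hx₀ : 0 < φ.degreeOf 0) (hx₁ : φ.degreeOf 0 < m.minFac)
    (hy : φ.degreeOf 1 < n) {k : ℕ} (hnk : n ∣ k) (hmk : ¬ m ∣ k)
    (hγ : (MvPolynomial.aeval ![α, β] φ) ^ Fintype.card F ^ k = MvPolynomial.aeval ![α, β] φ) :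
    False := by
  classical
  set γ := MvPolynomial.aeval ![α, β] φ with hγdef
  set D := φ.degreeOf 0 with hD
  have hk0 : k ≠ 0 := fun h0 => hmk (h0 ▸ dvd_zero m)
  set e := Nat.gcd k m with he
  have hem : e ∣ m := Nat.gcd_dvd_right k m
  have hek : e ∣ k := Nat.gcd_dvd_left k m
  have he0 : 0 < e := Nat.gcd_pos_of_pos_left m (Nat.pos_of_ne_zero hk0)
  have hlt : e < m := lt_of_le_of_ne (Nat.le_of_dvd (by omega) hem)
      (fun hEq => hmk (hEq ▸ hek))
  obtain ⟨c, hc⟩ := hem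
  obtain ⟨u, hu⟩ := hek
  have hco : Nat.Coprime u c := by
    have h1 := Nat.coprime_div_gcd_div_gcd (m := k) (n := m) he0
    have h2 : k / e = u := by rw [hu, Nat.mul_div_cancel_left u he0]
    have h3 : m / e = c := by rw [hc, Nat.mul_div_cancel_left c he0]
    rwa [← he, h2, h3] at h1
  have hc1 : 1 < c := by
    have h0 : c ≠ 0 := by intro h0; rw [h0, mul_zero] at hc; omega
    have h1 : c ≠ 1 := by intro h1; rw [h1, mul_one] at hc; omega
    omega
  have hminFac_le : m.minFac ≤ c :=
    Nat.minFac_le_of_dvd hc1 ⟨e, by rw [hc]; ring⟩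
  have hβk : β ^ Fintype.card F ^ k = β := pow_fix_of_minpoly_dvd (by rw [hnd]; exact hnk)
  have hβt : ∀ t : ℕ, β ^ Fintype.card F ^ (t * k) = β := fun t => pow_fix_mul hβk t
  have hγt : ∀ t : ℕ, γ ^ Fintype.card F ^ (t * k) = γ := fun t => pow_fix_mul hγ t
  have key : ∀ t : ℕ, MvPolynomial.aeval ![α ^ Fintype.card F ^ (t * k), β] φ = γ := by
    intro t
    obtain ⟨ρ, hρ⟩ := exists_powQ (F := F) (t * k)
    have hcomp := MvPolynomial.comp_aeval_apply (f := ![α, β]) ρ φ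
    have hfun : (fun i => ρ (![α, β] i)) = ![α ^ Fintype.card F ^ (t * k), β] := by
      funext i
      fin_cases i
      · simp [hρ]
      · simp [hρ, hβt t]
    rw [hfun] at hcomp
    rw [← hcomp, hρ]
    exact hγt t
  set ψ : Polynomial 𝕂 := MvPolynomial.aeval ![Polynomial.X, Polynomial.C β] φ with hψ
  set θ : Polynomial 𝕂 := ψ - Polynomial.C γ with hθ
  have hθcoeff : θ.coeff D ≠ 0 := by
    rw [hθ, Polynomial.coeff_sub, Polynomial.coeff_C, if_neg (by omega : ¬ D = 0), sub_zero, hψ]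
    exact psi_coeff_ne_zero hnd hx₀ hy
  have hθne : θ ≠ 0 := fun h0 => hθcoeff (by rw [h0]; simp)
  have hθdeg : θ.natDegree ≤ D := by
    refine le_trans (Polynomial.natDegree_sub_le _ _) ?_
    have h1 : ψ.natDegree ≤ D := by rw [hψ]; exact psi_natDegree_le β φ
    have h2 : (Polynomial.C γ).natDegree = 0 := Polynomial.natDegree_C γ
    exact max_le h1 (by omega)
  have hroot : ∀ t ∈ Finset.range c,
      (α ^ Fintype.card F ^ (t * k)) ∈ θ.roots.toFinset := by
    intro t _
    rw [Multiset.mem_toFinset, Polynomial.mem_roots hθne]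
    show θ.eval _ = 0
    rw [hθ, Polynomial.eval_sub, Polynomial.eval_C, hψ, psi_eval, key t, sub_self]
  have haux : ∀ t1 t2, t1 ∈ Finset.range c → t2 ∈ Finset.range c → t1 < t2 →
      α ^ Fintype.card F ^ (t1 * k) = α ^ Fintype.card F ^ (t2 * k) → False := by
    intro t1 t2 h1 h2 hlt12 heq
    have hstep : (α ^ Fintype.card F ^ ((t2 - t1) * k)) ^ Fintype.card F ^ (t1 * k)
        = α ^ Fintype.card F ^ (t2 * k) := by
      rw [← pow_mul, ← pow_add]
      congr 2
      rw [← add_mul]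
      congr 1
      omega
    obtain ⟨ρ, hρ⟩ := exists_powQ (F := F) (t1 * k)
    have hραt : ρ (α ^ Fintype.card F ^ ((t2 - t1) * k)) = ρ α := by
      rw [hρ, hρ, hstep, ← heq]
    have hfix2 : α ^ Fintype.card F ^ ((t2 - t1) * k) = α := ρ.injective hραt
    have hdvd : m ∣ (t2 - t1) * k := by
      have := minpoly_natDegree_dvd (F := F) hfix2
      rwa [hmd] at this
    have h1' : c ∣ (t2 - t1) * u := by
      have hstep2 : e * c ∣ e * ((t2 - t1) * u) := by
        rw [← hc]
        have h5 : e * ((t2 - t1) * u) = (t2 - t1) * k := by rw [hu]; ring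
        rw [h5]
        exact hdvd
      exact (Nat.mul_dvd_mul_iff_left he0).mp hstep2
    have h2' : c ∣ t2 - t1 := (hco.symm).dvd_of_dvd_mul_right h1'
    have h3' : c ≤ t2 - t1 := Nat.le_of_dvd (by omega) h2'
    rw [Finset.mem_range] at h1 h2
    omega
  have hinj : Set.InjOn (fun t => α ^ Fintype.card F ^ (t * k)) (Finset.range c) := by
    intro t1 h1 t2 h2 heq
    rw [Finset.mem_coe] at h1 h2
    rcases lt_trichotomy t1 t2 with hcc | hcc | hcc
    · exact (haux t1 t2 h1 h2 hcc heq).elim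
    · exact hcc
    · exact (haux t2 t1 h2 h1 hcc heq.symm).elim
  have himsub : (Finset.range c).image (fun t => α ^ Fintype.card F ^ (t * k))
      ⊆ θ.roots.toFinset := Finset.image_subset_iff.mpr hroot
  have hcard1 : c ≤ θ.roots.toFinset.card := by
    have hcle := Finset.card_le_card himsub
    rwa [Finset.card_image_of_injOn hinj, Finset.card_range] at hcle
  have hcard2 : θ.roots.toFinset.card ≤ D :=
    le_trans (le_trans (Multiset.toFinset_card_le _) (Polynomial.card_roots' θ)) hθdeg
  omega

end Aux

/-- Let `m, n > 1` be coprime with smallest prime divisors `m₁, n₁`, and let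
`φ(x,y) ∈ 𝔽_q[x,y]` with `0 < deg_x φ < m₁` and `0 < deg_y φ < n₁`.  If `f, g` are
monic irreducible polynomials over `𝔽_q` of degrees `m, n` with roots `α_i`, `β_j`
in the algebraic closure, then `∏_{i,j} (x - φ(α_i, β_j))` is irreducible over `𝔽_q`. -/
theorem stmt_12 {F : Type*} [Field F] [Fintype F] (q : ℕ) (hq : Fintype.card F = q)
    (m n m₁ n₁ : ℕ) (hm : 1 < m) (hn : 1 < n) (hmn : Nat.Coprime m n)
    (hm₁ : m₁ = m.minFac) (hn₁ : n₁ = n.minFac)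
    (φ : MvPolynomial (Fin 2) F)
    (hx₀ : 0 < φ.degreeOf 0) (hx₁ : φ.degreeOf 0 < m₁)
    (hy₀ : 0 < φ.degreeOf 1) (hy₁ : φ.degreeOf 1 < n₁)
    (f g : Polynomial F) (hfm : f.Monic) (hgm : g.Monic)
    (hfi : Irreducible f) (hgi : Irreducible g)
    (hfd : f.natDegree = m) (hgd : g.natDegree = n)
    (h : Polynomial F)
    (hh : h.map (algebraMap F (AlgebraicClosure F)) =
      ((((f.map (algebraMap F (AlgebraicClosure F))).roots.bind fun α =>
          (g.map (algebraMap F (AlgebraicClosure F))).roots.map fun β =>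
            MvPolynomial.aeval ![α, β] φ).map
        fun γ => X - C γ)).prod) :
    Irreducible h := by
  classical
  subst hq hm₁ hn₁
  set i := algebraMap F (AlgebraicClosure F) with hi
  have hinj : Function.Injective i := i.injective
  set M := ((f.map i).roots.bind fun α =>
      (g.map i).roots.map fun β => MvPolynomial.aeval ![α, β] φ) with hM
  -- roots cards
  have hfcard : (f.map i).roots.card = m := by
    rw [IsAlgClosed.card_roots_eq_natDegree,
      natDegree_map, hfd]
  have hgcard : (g.map i).roots.card = n := by
    rw [IsAlgClosed.card_roots_eq_natDegree,
      natDegree_map, hgd]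
  have hMcard : M.card = m * n := by
    rw [hM, Multiset.card_bind]
    rw [show (Multiset.card ∘ fun α => Multiset.map
          (fun β => MvPolynomial.aeval ![α, β] φ) ((g.map i).roots))
        = fun _ : AlgebraicClosure F => n from funext fun α => by
      rw [Function.comp_apply, Multiset.card_map, hgcard]]
    rw [Multiset.map_const', Multiset.sum_replicate, hfcard, smul_eq_mul]
  -- h is monic
  have hmapmonic : (h.map i).Monic := by
    rw [hh]
    exact monic_multiset_prod_of_monic _ _ fun γ _ => monic_X_sub_C γ
  have hmonic : h.Monic := Polynomial.monic_of_injective hinj hmapmonic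
  -- degree of h
  have hdeg : h.natDegree = m * n := by
    have h2 : (h.map i).natDegree = m * n := by
      rw [hh, Polynomial.natDegree_multiset_prod_of_monic _ fun pp hpp => by
        obtain ⟨γ, _, rfl⟩ := Multiset.mem_map.mp hpp
        exact monic_X_sub_C γ]
      rw [Multiset.map_map]
      have h3 : (M.map fun γ => ((X - C γ : Polynomial (AlgebraicClosure F))).natDegree)
          = M.map fun _ => 1 :=
        Multiset.map_congr rfl fun γ _ => natDegree_X_sub_C γ
      rw [show (Polynomial.natDegree ∘ fun γ => (X - C γ : Polynomial (AlgebraicClosure F)))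
        = fun γ => ((X - C γ : Polynomial (AlgebraicClosure F))).natDegree from rfl, h3,
        Multiset.map_const', Multiset.sum_replicate, hMcard, smul_eq_mul, mul_one]
    rwa [natDegree_map] at h2
  -- pick roots
  obtain ⟨α, hα⟩ := Multiset.exists_mem_of_ne_zero
    (Multiset.card_pos.mp (by rw [hfcard]; omega) : (f.map i).roots ≠ 0)
  obtain ⟨β, hβ⟩ := Multiset.exists_mem_of_ne_zero
    (Multiset.card_pos.mp (by rw [hgcard]; omega) : (g.map i).roots ≠ 0)
  have hαroot : (Polynomial.aeval α) f = 0 := by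
    have h4 := Polynomial.isRoot_of_mem_roots hα
    rwa [Polynomial.IsRoot, Polynomial.eval_map, ← Polynomial.aeval_def] at h4
  have hβroot : (Polynomial.aeval β) g = 0 := by
    have h4 := Polynomial.isRoot_of_mem_roots hβ
    rwa [Polynomial.IsRoot, Polynomial.eval_map, ← Polynomial.aeval_def] at h4
  have hminα : minpoly F α = f := (minpoly.eq_of_irreducible_of_monic hfi hαroot hfm).symm
  have hminβ : minpoly F β = g := (minpoly.eq_of_irreducible_of_monic hgi hβroot hgm).symm
  have hmdα : (minpoly F α).natDegree = m := by rw [hminα, hfd]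
  have hmdβ : (minpoly F β).natDegree = n := by rw [hminβ, hgd]
  set γ := MvPolynomial.aeval ![α, β] φ with hγdef
  have hγM : γ ∈ M := Multiset.mem_bind.mpr ⟨α, hα, Multiset.mem_map_of_mem _ hβ⟩
  have haevalγ : Polynomial.aeval γ h = 0 := by
    have h5 : Polynomial.eval γ (h.map i) = 0 := by
      rw [hh, Polynomial.eval_multiset_prod]
      refine Multiset.prod_eq_zero ?_
      refine Multiset.mem_map.mpr ⟨X - C γ, Multiset.mem_map_of_mem _ hγM, ?_⟩
      simp
    rwa [Polynomial.aeval_def, ← Polynomial.eval_map]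
  have hint : IsIntegral F γ := (Algebra.IsAlgebraic.isAlgebraic (R := F) γ).isIntegral
  -- fixed under q^(m*n)
  have hαfix : α ^ Fintype.card F ^ (m * n) = α :=
    pow_fix_of_minpoly_dvd (by rw [hmdα]; exact ⟨n, rfl⟩)
  have hβfix : β ^ Fintype.card F ^ (m * n) = β :=
    pow_fix_of_minpoly_dvd (by rw [hmdβ]; exact ⟨m, mul_comm m n⟩)
  have hγfix : γ ^ Fintype.card F ^ (m * n) = γ := by
    obtain ⟨ρ, hρ⟩ := exists_powQ (F := F) (m * n)
    have hcomp := MvPolynomial.comp_aeval_apply (f := ![α, β]) ρ φ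
    have hfun : (fun j => ρ (![α, β] j)) = ![α, β] := by
      funext j
      fin_cases j
      · simp [hρ, hαfix]
      · simp [hρ, hβfix]
    rw [hfun] at hcomp
    rw [← hρ γ, hcomp]
  have hdvd_mn : (minpoly F γ).natDegree ∣ m * n := minpoly_natDegree_dvd hγfix
  -- the degree is exactly m*n
  have hd_eq : (minpoly F γ).natDegree = m * n := by
    by_contra hne
    have hmn0 : 0 < m * n := by positivity
    obtain ⟨w, hw⟩ := hdvd_mn
    have hw1 : 1 < w := by
      have h0 : w ≠ 0 := by intro h0; rw [h0, mul_zero] at hw; omega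
      have h1 : w ≠ 1 := by intro h1; rw [h1, mul_one] at hw; exact hne hw.symm
      omega
    have hp : w.minFac.Prime := Nat.minFac_prime (by omega)
    obtain ⟨w', hw'⟩ := Nat.minFac_dvd w
    set p := w.minFac with hpdef
    set k := (minpoly F γ).natDegree * w' with hk
    have hk_eq : m * n = p * k := by rw [hw, hw', hk]; ring
    have hγk : γ ^ Fintype.card F ^ k = γ := pow_fix_of_minpoly_dvd ⟨w', rfl⟩
    have hpmn : p ∣ m * n := ⟨k, hk_eq⟩
    have hp1 : 1 < p := hp.one_lt
    rcases (Nat.Prime.dvd_mul hp).mp hpmn with hpm | hpn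
    · -- p ∣ m
      obtain ⟨m', hm'⟩ := hpm
      have hnk : n ∣ k := by
        have h5 : p * k = p * (m' * n) := by rw [← hk_eq, hm']; ring
        have h6 : k = m' * n := Nat.eq_of_mul_eq_mul_left (by omega) h5
        exact ⟨m', by rw [h6]; ring⟩
      have hmk : ¬ m ∣ k := by
        rintro ⟨t, ht⟩
        have h7 : m * n = m * (p * t) := by rw [hk_eq, ht]; ring
        have h8 : n = p * t := Nat.eq_of_mul_eq_mul_left (by omega) h7
        have h9 : p ∣ Nat.gcd m n := Nat.dvd_gcd ⟨m', hm'⟩ ⟨t, h8⟩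
        rw [Nat.Coprime.gcd_eq_one hmn] at h9
        have := Nat.le_of_dvd one_pos h9
        omega
      exact core_lemma hmdα hmdβ hm hx₀ hx₁
        (lt_of_lt_of_le hy₁ (Nat.minFac_le (by omega))) hnk hmk hγk
    · -- p ∣ n
      obtain ⟨n', hn'⟩ := hpn
      have hmk : m ∣ k := by
        have h5 : p * k = p * (n' * m) := by rw [← hk_eq, hn']; ring
        have h6 : k = n' * m := Nat.eq_of_mul_eq_mul_left (by omega) h5
        exact ⟨n', by rw [h6]; ring⟩
      have hnk : ¬ n ∣ k := by
        rintro ⟨t, ht⟩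
        have h7 : n * m = n * (p * t) := by rw [mul_comm n m, hk_eq, ht]; ring
        have h8 : m = p * t := Nat.eq_of_mul_eq_mul_left (by omega) h7
        have h9 : p ∣ Nat.gcd m n := Nat.dvd_gcd ⟨t, h8⟩ ⟨n', hn'⟩
        rw [Nat.Coprime.gcd_eq_one hmn] at h9
        have := Nat.le_of_dvd one_pos h9
        omega
      -- swap variables
      set φ' := MvPolynomial.rename (Equiv.swap (0 : Fin 2) 1) φ with hφ'
      have hd0' : φ'.degreeOf 0 = φ.degreeOf 1 := by
        have := MvPolynomial.degreeOf_rename_of_injective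
          (p := φ) (f := Equiv.swap (0 : Fin 2) 1) (Equiv.injective _) 1
        rwa [Equiv.swap_apply_right] at this
      have hd1' : φ'.degreeOf 1 = φ.degreeOf 0 := by
        have := MvPolynomial.degreeOf_rename_of_injective
          (p := φ) (f := Equiv.swap (0 : Fin 2) 1) (Equiv.injective _) 0
        rwa [Equiv.swap_apply_left] at this
      have haev : MvPolynomial.aeval ![β, α] φ' = γ := by
        rw [hφ', MvPolynomial.aeval_rename]
        have hfun : (![β, α] ∘ (Equiv.swap (0 : Fin 2) 1)) = ![α, β] := by
          funext j
          fin_cases j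
          · simp [Equiv.swap_apply_left]
          · simp [Equiv.swap_apply_right]
        rw [hfun]
      refine core_lemma hmdβ hmdα hn (φ := φ') ?_ ?_ ?_ hmk hnk ?_
      · rw [hd0']; exact hy₀
      · rw [hd0']; exact hy₁
      · rw [hd1']; exact lt_of_lt_of_le hx₁ (Nat.minFac_le (by omega))
      · rw [haev]; exact hγk
  -- conclude
  have hmin_dvd : minpoly F γ ∣ h := minpoly.dvd F γ haevalγ
  have heq : h = minpoly F γ :=
    Polynomial.eq_of_monic_of_dvd_of_natDegree_le (minpoly.monic hint) hmonic hmin_dvd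
      (by rw [hdeg, hd_eq])
  rw [heq]
  exact minpoly.irreducible hint
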